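/- Vanishing quadrangle torsion restricts a positive-definite metric by triangle inequalities: let h₁, h₂, ĥ₁, ĥ₂ ∈ S with h₁·h₂ = ĥ₁·ĥ₂ (a quadrangle), g ∈ G; assume 𝔤(g) is symmetric positive definite, that 𝔤(g·h₁) = (V g h₁)ᵀ·𝔤(g)·(V g h₁) and 𝔤(g·ĥ₁) = (V g ĥ₁)ᵀ·𝔤(g)·(V g ĥ₁), and that the quadrangle torsion vanishes, i.e. (V g h₁)·e_{h₂} − (V g ĥ₁)·e_{ĥ₂} = e_{ĥ₁} − e_{h₁}. Then |√(𝔤(g·h₁)_{h₂,h₂}) − √(𝔤(g·ĥ₁)_{ĥ₂,ĥ₂})| ≤ √(𝔤(g)_{h₁,h₁} + 𝔤(g)_{ĥ₁,ĥ₁} − 2·𝔤(g)_{h₁,ĥ₁}) ≤ √(𝔤(g·h₁)_{h₂,h₂}) + √(𝔤(g·ĥ₁)_{ĥ₂,ĥ₂}). -/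

import Mathlib

open Matrix

private lemma entry_eq_dot {n : Type*} [Fintype n] (M B : Matrix n n ℝ) (i j : n) :
    (Bᵀ * M * B) i j = (fun k => B k i) ⬝ᵥ M *ᵥ (fun k => B k j) := by
  simp [Matrix.mul_apply, dotProduct, mulVec, Finset.sum_mul, Finset.mul_sum, transpose_apply]
  rw [Finset.sum_comm]
  exact Finset.sum_congr rfl fun k _ => Finset.sum_congr rfl fun l _ => by ring

open scoped MatrixOrder Matrix.Norms.L2Operator in
private lemma sqrt_quad_eq_norm {n : Type*} [Fintype n] [DecidableEq n] {M : Matrix n n ℝ}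
    (hM : M.PosDef) (x : n → ℝ) :
    Real.sqrt (x ⬝ᵥ M *ᵥ x) =
      ‖(WithLp.equiv 2 (n → ℝ)).symm (CFC.sqrt M *ᵥ x)‖ := by
  set A := CFC.sqrt M with hAdef
  have hA : A * A = M := CFC.sqrt_mul_sqrt_self M hM.posSemidef.nonneg
  have hsym : Aᵀ = A := (CFC.sqrt_nonneg M).posSemidef.isHermitian
  have key : x ⬝ᵥ M *ᵥ x = (A *ᵥ x) ⬝ᵥ (A *ᵥ x) := by
    rw [← hA, ← Matrix.mulVec_mulVec, Matrix.dotProduct_mulVec]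
    congr 1
    rw [← Matrix.mulVec_transpose, hsym]
  rw [key, EuclideanSpace.norm_eq]
  congr 1
  simp [dotProduct, sq]

open scoped MatrixOrder Matrix.Norms.L2Operator in
private lemma posdef_triangle {n : Type*} [Fintype n] [DecidableEq n] {M : Matrix n n ℝ}
    (hM : M.PosDef) (x y : n → ℝ) :
    |Real.sqrt (x ⬝ᵥ M *ᵥ x) - Real.sqrt (y ⬝ᵥ M *ᵥ y)| ≤
        Real.sqrt ((x - y) ⬝ᵥ M *ᵥ (x - y)) ∧
      Real.sqrt ((x - y) ⬝ᵥ M *ᵥ (x - y)) ≤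
        Real.sqrt (x ⬝ᵥ M *ᵥ x) + Real.sqrt (y ⬝ᵥ M *ᵥ y) := by
  rw [sqrt_quad_eq_norm hM, sqrt_quad_eq_norm hM, sqrt_quad_eq_norm hM]
  have hd : (WithLp.equiv 2 (n → ℝ)).symm (CFC.sqrt M *ᵥ (x - y)) =
      (WithLp.equiv 2 (n → ℝ)).symm (CFC.sqrt M *ᵥ x) -
      (WithLp.equiv 2 (n → ℝ)).symm (CFC.sqrt M *ᵥ y) := by
    rw [Matrix.mulVec_sub]; rfl
  rw [hd]
  exact ⟨abs_norm_sub_norm_le _ _, norm_sub_le _ _⟩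

/-- Vanishing quadrangle torsion restricts a positive definite metric by
triangle inequalities:
`|√𝔤(g·h₁)_{h₂,h₂} − √𝔤(g·ĥ₁)_{ĥ₂,ĥ₂}| ≤ √(𝔤(g)_{h₁,h₁}+𝔤(g)_{ĥ₁,ĥ₁}−2𝔤(g)_{h₁,ĥ₁})
 ≤ √𝔤(g·h₁)_{h₂,h₂} + √𝔤(g·ĥ₁)_{ĥ₂,ĥ₂}`
for a quadrangle `h₁·h₂ = ĥ₁·ĥ₂` (here `k₁, k₂` play the role of `ĥ₁, ĥ₂`). -/
theorem quadrangle_torsionFree_triangle_inequalities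
    {G : Type*} [Group G] [DecidableEq G] (S : Set G) [Fintype S]
    (he : (1 : G) ∉ S)
    (𝔤 : G → Matrix S S ℝ)
    (V : G → S → Matrix S S ℝ)
    (h₁ h₂ k₁ k₂ : S) (hquad : (h₁ : G) * (h₂ : G) = (k₁ : G) * (k₂ : G)) (g : G)
    (hpos : (𝔤 g).PosDef)
    (hc1 : 𝔤 (g * h₁) = (V g h₁)ᵀ * 𝔤 g * V g h₁)
    (hc2 : 𝔤 (g * k₁) = (V g k₁)ᵀ * 𝔤 g * V g k₁)
    (htor : ∀ h : S, V g h₁ h h₂ - V g k₁ h k₂ =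
      (if h = k₁ then 1 else 0) - (if h = h₁ then 1 else 0)) :
    |Real.sqrt (𝔤 (g * h₁) h₂ h₂) - Real.sqrt (𝔤 (g * k₁) k₂ k₂)| ≤
        Real.sqrt (𝔤 g h₁ h₁ + 𝔤 g k₁ k₁ - 2 * 𝔤 g h₁ k₁) ∧
      Real.sqrt (𝔤 g h₁ h₁ + 𝔤 g k₁ k₁ - 2 * 𝔤 g h₁ k₁) ≤
        Real.sqrt (𝔤 (g * h₁) h₂ h₂) + Real.sqrt (𝔤 (g * k₁) k₂ k₂) := by
  set x : S → ℝ := fun k => V g h₁ k h₂ with hx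
  set y : S → ℝ := fun k => V g k₁ k k₂ with hy
  have e1 : 𝔤 (g * h₁) h₂ h₂ = x ⬝ᵥ 𝔤 g *ᵥ x := by
    rw [hc1]; exact entry_eq_dot _ _ _ _
  have e2 : 𝔤 (g * k₁) k₂ k₂ = y ⬝ᵥ 𝔤 g *ᵥ y := by
    rw [hc2]; exact entry_eq_dot _ _ _ _
  have hsymm : 𝔤 g k₁ h₁ = 𝔤 g h₁ k₁ := by
    simpa using (hpos.isHermitian.apply k₁ h₁).symm
  have e3 : 𝔤 g h₁ h₁ + 𝔤 g k₁ k₁ - 2 * 𝔤 g h₁ k₁ = (x - y) ⬝ᵥ 𝔤 g *ᵥ (x - y) := by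
    have hxy : x - y = fun k =>
        (if k = k₁ then (1:ℝ) else 0) - (if k = h₁ then 1 else 0) := by
      funext k; exact htor k
    rw [hxy]
    by_cases hk : h₁ = k₁
    · subst hk; simp [dotProduct, mulVec]; ring
    · simp [dotProduct, mulVec, sub_mul, mul_sub, ite_mul, mul_ite,
        Finset.sum_sub_distrib, Finset.sum_ite_eq', hk, Ne.symm hk]
      linarith [hsymm]
  rw [e1, e2, e3]
  exact posdef_triangle hpos x y
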